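/- Let α ∈ ℂ satisfy α⁴ − α³ + α² − α + 1 = 0 and set β = −α². Then β⁴ − β³ + β² − β + 1 = 0, and the projective transformation of ℂP² induced by the invertible linear map T : ℂ³ → ℂ³, T(x,y,z) = (z, x+y−z, y), maps the line Lᵢ(α) of the arrangement A(α) onto the line L_{σ(i)}(β) of the arrangement A(β) for every i ∈ {1,…,11}, where σ = (1 3 2 4)(5 6)(7 9 10 8). -/
import Mathlib


open Finset Projectivization
open scoped LinearAlgebra.Projectivization

/-- The complex projective plane `ℂP²`, as the projectivization of `ℂ³`. -/
abbrev CP2 := ℙ ℂ (Fin 3 → ℂ)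

/-- The quotient topology on `ℂP²` coming from `ℂ³ \ {0}`. -/
noncomputable instance : TopologicalSpace CP2 :=
  inferInstanceAs (TopologicalSpace (Quotient _))

/-- The projective line `{c₀ x + c₁ y + c₂ z = 0}` with coefficient vector `c`. -/
noncomputable def lineOf (c : Fin 3 → ℂ) : Set CP2 :=
  {p | c 0 * p.rep 0 + c 1 * p.rep 1 + c 2 * p.rep 2 = 0}

/-- Coefficient vectors of the eleven linear forms defining the arrangement `A(α)`:
`L₁: z`, `L₂: x+y−z`, `L₃: x`, `L₄: y`, `L₅: x−z`, `L₆: y−z`, `L₇: −α³x+z`, `L₈: y−αz`,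
`L₉: (α−1)x−y+z`, `L₁₀: −α(α−1)x+y+α(α−1)z`, `L₁₁: −α(α−1)x+y−αz`. -/
def coeff (α : ℂ) : ℕ → (Fin 3 → ℂ)
  | 1 => ![0, 0, 1]
  | 2 => ![1, 1, -1]
  | 3 => ![1, 0, 0]
  | 4 => ![0, 1, 0]
  | 5 => ![1, 0, -1]
  | 6 => ![0, 1, -1]
  | 7 => ![-α ^ 3, 0, 1]
  | 8 => ![0, 1, -α]
  | 9 => ![α - 1, -1, 1]
  | 10 => ![-α * (α - 1), 1, α * (α - 1)]
  | 11 => ![-α * (α - 1), 1, -α]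
  | _ => 0

/-- The `i`-th line of the arrangement `A(α)`, for `i ∈ {1,…,11}`. -/
noncomputable def Aline (α : ℂ) (i : ℕ) : Set CP2 := lineOf (coeff α i)

/-- A family `lines` indexed by `{1,…,n}` is a realization of the combinatorics with point set
`P ⊆ Finset ℕ` if the lines are pairwise distinct and, for each pair of distinct indices
`i, j`, the set of indices `k` with `lines i ∩ lines j ⊆ lines k` is exactly the (unique)
member of `P` containing both `i` and `j`. -/
def IsRealization (P : Finset (Finset ℕ)) (n : ℕ) (lines : ℕ → Set CP2) : Prop :=
  (∀ i ∈ Finset.Icc 1 n, ∀ j ∈ Finset.Icc 1 n, i ≠ j → lines i ≠ lines j) ∧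
  ∀ i ∈ Finset.Icc 1 n, ∀ j ∈ Finset.Icc 1 n, i ≠ j → ∀ S ∈ P, i ∈ S → j ∈ S →
    {k : ℕ | k ∈ Finset.Icc 1 n ∧ lines i ∩ lines j ⊆ lines k} = ↑S

/-- The permutation `σ = (1 3 2 4)(5 6)(7 9 10 8)`. -/
def sigmaK : Equiv.Perm ℕ :=
  ([1,3,2,4] : List ℕ).formPerm * ([5,6] : List ℕ).formPerm *
    ([7,9,10,8] : List ℕ).formPerm

/-- The linear map `T : ℂ³ → ℂ³`, `(x, y, z) ↦ (z, x + y − z, y)`. -/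
noncomputable def Tlin : (Fin 3 → ℂ) →ₗ[ℂ] (Fin 3 → ℂ) :=
  Matrix.toLin' !![0, 0, 1; 1, 1, -1; 0, 1, 0]

/-- Membership in `lineOf c` for a point given by homogeneous coordinates. -/
lemma mem_lineOf {v : Fin 3 → ℂ} (hv : v ≠ 0) (c : Fin 3 → ℂ) :
    Projectivization.mk ℂ v hv ∈ lineOf c ↔ c 0 * v 0 + c 1 * v 1 + c 2 * v 2 = 0 := by
  obtain ⟨a, ha⟩ := (Projectivization.mk_eq_mk_iff ℂ _ _
    (Projectivization.rep_nonzero _) hv).mp (Projectivization.mk_rep (Projectivization.mk ℂ v hv))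
  simp only [lineOf, Set.mem_setOf_eq, ← ha, Pi.smul_apply, Units.smul_def, smul_eq_mul]
  rw [show c 0 * (↑a * v 0) + c 1 * (↑a * v 1) + c 2 * (↑a * v 2)
      = ↑a * (c 0 * v 0 + c 1 * v 1 + c 2 * v 2) by ring]
  simp [a.ne_zero]

/-- The inverse linear map `S : (a,b,c) ↦ (a+b−c, c, a)`. -/
noncomputable def Slin : (Fin 3 → ℂ) →ₗ[ℂ] (Fin 3 → ℂ) :=
  Matrix.toLin' !![1, 1, -1; 0, 0, 1; 1, 0, 0]

lemma Slin_Tlin : ∀ v, Slin (Tlin v) = v := by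
  intro v
  have : Slin ∘ₗ Tlin = LinearMap.id := by
    rw [Slin, Tlin, ← Matrix.toLin'_mul]
    rw [show (!![1, 1, -1; 0, 0, 1; 1, 0, 0] * !![0, 0, 1; 1, 1, -1; 0, 1, 0] : Matrix (Fin 3) (Fin 3) ℂ) = 1 by
      rw [Matrix.mul_fin_three, Matrix.one_fin_three]; norm_num]
    exact Matrix.toLin'_one
  calc Slin (Tlin v) = (Slin ∘ₗ Tlin) v := rfl
    _ = v := by rw [this]; rfl

lemma Tlin_Slin : ∀ v, Tlin (Slin v) = v := by
  intro v
  have : Tlin ∘ₗ Slin = LinearMap.id := by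
    rw [Slin, Tlin, ← Matrix.toLin'_mul]
    rw [show (!![0, 0, 1; 1, 1, -1; 0, 1, 0] * !![1, 1, -1; 0, 0, 1; 1, 0, 0] : Matrix (Fin 3) (Fin 3) ℂ) = 1 by
      rw [Matrix.mul_fin_three, Matrix.one_fin_three]; norm_num]
    exact Matrix.toLin'_one
  calc Tlin (Slin v) = (Tlin ∘ₗ Slin) v := rfl
    _ = v := by rw [this]; rfl

lemma Tlin_inj : Function.Injective Tlin := Function.LeftInverse.injective Slin_Tlin

lemma Tlin_surj : Function.Surjective Tlin := Function.RightInverse.surjective Tlin_Slin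

lemma Tlin_apply (v : Fin 3 → ℂ) :
    Tlin v 0 = v 2 ∧ Tlin v 1 = v 0 + v 1 - v 2 ∧ Tlin v 2 = v 1 := by
  refine ⟨?_, ?_, ?_⟩ <;>
    simp [Tlin, Matrix.toLin'_apply, Matrix.mulVec, dotProduct, Fin.sum_univ_three] <;> ring

/-- The key transport lemma for lines under the projective transformation induced by `Tlin`. -/
lemma map_lineOf (c c' : Fin 3 → ℂ) (t : ℂ) (ht : t ≠ 0)
    (h : ∀ v : Fin 3 → ℂ,
      c' 0 * Tlin v 0 + c' 1 * Tlin v 1 + c' 2 * Tlin v 2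
        = t * (c 0 * v 0 + c 1 * v 1 + c 2 * v 2)) :
    Projectivization.map Tlin Tlin_inj '' lineOf c = lineOf c' := by
  ext q
  constructor
  · rintro ⟨p, hp, rfl⟩
    rw [← p.mk_rep] at hp ⊢
    rw [Projectivization.map_mk, mem_lineOf, h]
    rw [mem_lineOf] at hp
    simp [hp]
  · intro hq
    obtain ⟨w, hw⟩ := Tlin_surj q.rep
    have hw0 : w ≠ 0 := by
      rintro rfl
      exact q.rep_nonzero (by simpa using hw.symm)
    have h0 : c' 0 * q.rep 0 + c' 1 * q.rep 1 + c' 2 * q.rep 2 = 0 := hq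
    have h1 := h w
    rw [hw] at h1
    rw [h1] at h0
    refine ⟨Projectivization.mk ℂ w hw0, ?_, ?_⟩
    · rw [mem_lineOf]
      exact (mul_eq_zero.mp h0).resolve_left ht
    · rw [Projectivization.map_mk, ← q.mk_rep]
      exact (Projectivization.mk_eq_mk_iff ℂ _ _ _ _).mpr ⟨1, by simp [hw]⟩

/-- If `α` is a root of `Φ₁₀` and `β = −α²`, then `β` is also a root of `Φ₁₀`, the linear map
`T(x,y,z) = (z, x+y−z, y)` is invertible, and the induced projective transformation of `ℂP²`
maps the line `Lᵢ(α)` of `A(α)` onto the line `L_{σ(i)}(β)` of `A(β)` for all `i ∈ {1,…,11}`. -/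
theorem stmt8 (α : ℂ) (hα : α ^ 4 - α ^ 3 + α ^ 2 - α + 1 = 0) (β : ℂ) (hβ : β = -α ^ 2) :
    β ^ 4 - β ^ 3 + β ^ 2 - β + 1 = 0 ∧
    ∃ hT : Function.Injective Tlin,
      ∀ i ∈ Finset.Icc 1 11,
        Projectivization.map Tlin hT '' Aline α i = Aline β (sigmaK i) := by
  subst hβ
  have hα0 : α ≠ 0 := by
    rintro rfl; norm_num at hα
  have hα1 : 1 + α ^ 2 ≠ 0 := by
    intro h
    exact one_ne_zero (by linear_combination hα - (α ^ 2 - α) * h : (1 : ℂ) = 0)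
  refine ⟨by linear_combination (α ^ 4 + α ^ 3 + α ^ 2 + α + 1) * hα, Tlin_inj, ?_⟩
  intro i hi
  rw [Finset.mem_Icc] at hi
  obtain ⟨hi1, hi2⟩ := hi
  have key : ∀ v : Fin 3 → ℂ, Tlin v 0 = v 2 ∧ Tlin v 1 = v 0 + v 1 - v 2 ∧ Tlin v 2 = v 1 :=
    Tlin_apply
  interval_cases i
  · rw [show sigmaK 1 = 3 by decide]
    exact map_lineOf _ _ 1 one_ne_zero fun v => by
      obtain ⟨e0, e1, e2⟩ := key v; simp only [coeff, e0, e1, e2]; simp; try ring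
  · rw [show sigmaK 2 = 4 by decide]
    exact map_lineOf _ _ 1 one_ne_zero fun v => by
      obtain ⟨e0, e1, e2⟩ := key v; simp only [coeff, e0, e1, e2]; simp; try ring
  · rw [show sigmaK 3 = 2 by decide]
    exact map_lineOf _ _ 1 one_ne_zero fun v => by
      obtain ⟨e0, e1, e2⟩ := key v; simp only [coeff, e0, e1, e2]; simp; try ring
  · rw [show sigmaK 4 = 1 by decide]
    exact map_lineOf _ _ 1 one_ne_zero fun v => by
      obtain ⟨e0, e1, e2⟩ := key v; simp only [coeff, e0, e1, e2]; simp; try ring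
  · rw [show sigmaK 5 = 6 by decide]
    exact map_lineOf _ _ 1 one_ne_zero fun v => by
      obtain ⟨e0, e1, e2⟩ := key v; simp only [coeff, e0, e1, e2]; simp; try ring
  · rw [show sigmaK 6 = 5 by decide]
    exact map_lineOf _ _ (-1) (by norm_num) fun v => by
      obtain ⟨e0, e1, e2⟩ := key v; simp only [coeff, e0, e1, e2]; simp; try ring
  · rw [show sigmaK 7 = 9 by decide]
    exact map_lineOf _ _ (-α ^ 2) (neg_ne_zero.mpr (pow_ne_zero 2 hα0)) fun v => by
      obtain ⟨e0, e1, e2⟩ := key v; simp only [coeff, e0, e1, e2]; simp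
      linear_combination (-(1 + α) * v 0) * hα
  · rw [show sigmaK 8 = 7 by decide]
    exact map_lineOf _ _ 1 one_ne_zero fun v => by
      obtain ⟨e0, e1, e2⟩ := key v; simp only [coeff, e0, e1, e2]; simp
      linear_combination ((α + α ^ 2) * v 2) * hα
  · rw [show sigmaK 9 = 10 by decide]
    exact map_lineOf _ _ (-α * (α ^ 2 + 1)) (by
        exact mul_ne_zero (neg_ne_zero.mpr hα0) (by rwa [add_comm] at hα1)) fun v => by
      obtain ⟨e0, e1, e2⟩ := key v; simp only [coeff, e0, e1, e2]; simp
      linear_combination (v 0 + v 1 - v 2) * hα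
  · rw [show sigmaK 10 = 8 by decide]
    exact map_lineOf _ _ (1 + α ^ 2) hα1 fun v => by
      obtain ⟨e0, e1, e2⟩ := key v; simp only [coeff, e0, e1, e2]; simp
      linear_combination (v 0 - v 2) * hα
  · rw [show sigmaK 11 = 11 by decide]
    exact map_lineOf _ _ (1 + α ^ 2) hα1 fun v => by
      obtain ⟨e0, e1, e2⟩ := key v; simp only [coeff, e0, e1, e2]; simp
      linear_combination (v 0 - v 2) * hα
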